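/- Let W_1, …, W_T be independent (not necessarily identically distributed) random N×N real matrices, each almost surely symmetric and doubly stochastic, and suppose there is a real B ∈ [0,1] such that ‖E[W_k²] − (1/N)𝟏𝟏ᵀ‖_op ≤ B for every k ∈ {1,…,T}. Then for every vertex index v ∈ {1,…,N} and all integers s < t in {1,…,T}, E[‖W_t ⋯ W_{s+1} e_v − (1/N)𝟏‖₂] ≤ B^{(t−s)/2}. -/

import Mathlib

open MeasureTheory ProbabilityTheory Matrix

noncomputable section

instance matrixMeasurableSpace (N : ℕ) : MeasurableSpace (Matrix (Fin N) (Fin N) ℝ) :=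
  inferInstanceAs (MeasurableSpace (Fin N → Fin N → ℝ))

/-- A matrix is doubly stochastic if it has nonnegative entries and all row and
column sums equal 1. -/
def IsDoublyStochastic {N : ℕ} (M : Matrix (Fin N) (Fin N) ℝ) : Prop :=
  (∀ i j, 0 ≤ M i j) ∧ (∀ i, ∑ j, M i j = 1) ∧ (∀ j, ∑ i, M i j = 1)

/-- Euclidean norm of a vector of ℝ^N. -/
def eNorm {N : ℕ} (x : Fin N → ℝ) : ℝ := Real.sqrt (∑ i, x i ^ 2)

/-- Operator (spectral) norm of a real N×N matrix. -/
def opNorm {N : ℕ} (M : Matrix (Fin N) (Fin N) ℝ) : ℝ :=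
  ‖Matrix.toEuclideanCLM (𝕜 := ℝ) M‖

/-- Entrywise expectation of a random matrix. -/
def matExp {N : ℕ} {Ω : Type*} [MeasurableSpace Ω] (μ : Measure Ω)
    (F : Ω → Matrix (Fin N) (Fin N) ℝ) : Matrix (Fin N) (Fin N) ℝ :=
  Matrix.of fun i j => ∫ ω, F ω i j ∂μ

/-- The product W_t * W_{t-1} * ⋯ * W_{s+1}. -/
def prodW {N : ℕ} (W : ℕ → Matrix (Fin N) (Fin N) ℝ) (s t : ℕ) :
    Matrix (Fin N) (Fin N) ℝ :=
  ((List.range (t - s)).map (fun k => W (t - k))).prod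

/-- The N×N all-ones matrix. -/
def onesMatrix (N : ℕ) : Matrix (Fin N) (Fin N) ℝ := Matrix.of fun _ _ => (1 : ℝ)

/-! ### Auxiliary lemmas -/

lemma euc_norm_eq {N : ℕ} (x : Fin N → ℝ) :
    ‖(EuclideanSpace.equiv (Fin N) ℝ).symm x‖ = Real.sqrt (∑ i, x i ^ 2) := by
  rw [EuclideanSpace.norm_eq]
  congr 1
  exact Finset.sum_congr rfl fun i _ => by
    simp [Real.norm_eq_abs, sq_abs]

lemma quad_le {N : ℕ} (M : Matrix (Fin N) (Fin N) ℝ) (x : Fin N → ℝ) :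
    x ⬝ᵥ (M *ᵥ x) ≤ opNorm M * ∑ i, x i ^ 2 := by
  open scoped Matrix.Norms.L2Operator in
  have hx : x ⬝ᵥ (M *ᵥ x)
      ≤ ‖(EuclideanSpace.equiv (Fin N) ℝ).symm x‖ *
        ‖(EuclideanSpace.equiv (Fin N) ℝ).symm (M *ᵥ x)‖ := by
    have := real_inner_le_norm ((EuclideanSpace.equiv (Fin N) ℝ).symm x)
      ((EuclideanSpace.equiv (Fin N) ℝ).symm (M *ᵥ x))
    simpa [PiLp.inner_apply, dotProduct, mul_comm] using this
  have hM : ‖(EuclideanSpace.equiv (Fin N) ℝ).symm (M *ᵥ x)‖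
      ≤ opNorm M * ‖(EuclideanSpace.equiv (Fin N) ℝ).symm x‖ := by
    have := M.l2_opNorm_mulVec ((EuclideanSpace.equiv (Fin N) ℝ).symm x)
    rw [Matrix.cstar_norm_def] at this
    exact this
  have h0 : (0:ℝ) ≤ ‖(EuclideanSpace.equiv (Fin N) ℝ).symm x‖ := norm_nonneg _
  calc x ⬝ᵥ (M *ᵥ x) ≤ _ := hx
    _ ≤ ‖(EuclideanSpace.equiv (Fin N) ℝ).symm x‖ *
        (opNorm M * ‖(EuclideanSpace.equiv (Fin N) ℝ).symm x‖) :=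
        mul_le_mul_of_nonneg_left hM h0
    _ = opNorm M * (‖(EuclideanSpace.equiv (Fin N) ℝ).symm x‖ *
        ‖(EuclideanSpace.equiv (Fin N) ℝ).symm x‖) := by ring
    _ = opNorm M * ∑ i, x i ^ 2 := by
        rw [euc_norm_eq, Real.mul_self_sqrt (Finset.sum_nonneg fun i _ => sq_nonneg _)]

lemma IsDoublyStochastic.one {N : ℕ} : IsDoublyStochastic (1 : Matrix (Fin N) (Fin N) ℝ) := by
  refine ⟨fun i j => ?_, fun i => ?_, fun j => ?_⟩ <;>
    simp [Matrix.one_apply]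
  · positivity

lemma IsDoublyStochastic.mul {N : ℕ} {M M' : Matrix (Fin N) (Fin N) ℝ}
    (h : IsDoublyStochastic M) (h' : IsDoublyStochastic M') :
    IsDoublyStochastic (M * M') := by
  obtain ⟨h1, h2, h3⟩ := h
  obtain ⟨h1', h2', h3'⟩ := h'
  refine ⟨fun i j => ?_, fun i => ?_, fun j => ?_⟩
  · rw [Matrix.mul_apply]
    exact Finset.sum_nonneg fun k _ => mul_nonneg (h1 i k) (h1' k j)
  · simp only [Matrix.mul_apply]
    rw [Finset.sum_comm]
    calc ∑ k, ∑ j, M i k * M' k j = ∑ k, M i k * ∑ j, M' k j := by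
          simp [Finset.mul_sum]
      _ = 1 := by simp [h2', h2 i]
  · simp only [Matrix.mul_apply]
    calc ∑ i, ∑ k, M i k * M' k j = ∑ k, (∑ i, M i k) * M' k j := by
          rw [Finset.sum_comm]; simp [Finset.sum_mul]
      _ = 1 := by simp [h3, h3' j]

lemma IsDoublyStochastic.entry_le_one {N : ℕ} {M : Matrix (Fin N) (Fin N) ℝ}
    (h : IsDoublyStochastic M) (i j : Fin N) : M i j ≤ 1 := by
  obtain ⟨h1, h2, _⟩ := h
  calc M i j ≤ ∑ k, M i k := Finset.single_le_sum (fun k _ => h1 i k) (Finset.mem_univ j)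
    _ = 1 := h2 i

lemma IsDoublyStochastic.mulVec_sum {N : ℕ} {M : Matrix (Fin N) (Fin N) ℝ}
    (h : IsDoublyStochastic M) (y : Fin N → ℝ) : ∑ i, (M *ᵥ y) i = ∑ i, y i := by
  simp only [Matrix.mulVec, dotProduct]
  rw [Finset.sum_comm]
  exact Finset.sum_congr rfl fun j _ => by
    rw [← Finset.sum_mul, h.2.2 j, one_mul]

lemma IsDoublyStochastic.mulVec_const {N : ℕ} {M : Matrix (Fin N) (Fin N) ℝ}
    (h : IsDoublyStochastic M) (c : ℝ) : (M *ᵥ fun _ => c) = fun _ => c := by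
  funext i
  simp only [Matrix.mulVec, dotProduct]
  rw [← Finset.sum_mul, h.2.1 i, one_mul]

lemma prodW_self {N : ℕ} (W : ℕ → Matrix (Fin N) (Fin N) ℝ) (s : ℕ) :
    prodW W s s = 1 := by simp [prodW]

lemma prodW_succ {N : ℕ} (W : ℕ → Matrix (Fin N) (Fin N) ℝ) {s r : ℕ} (h : s ≤ r) :
    prodW W s (r + 1) = W (r + 1) * prodW W s r := by
  have : r + 1 - s = (r - s) + 1 := by omega
  rw [prodW, this, List.range_succ_eq_map]
  simp only [List.map_cons, List.map_map, List.prod_cons, Nat.sub_zero]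
  rw [prodW]
  congr 1
  refine congrArg List.prod (List.map_congr_left fun k _ => ?_)
  simp only [Function.comp_apply]
  have hk : r + 1 - k.succ = r - k := by omega
  rw [hk]

lemma measurable_matmul {N : ℕ} {Ω : Type*} [MeasurableSpace Ω]
    {f g : Ω → Matrix (Fin N) (Fin N) ℝ} (hf : Measurable f) (hg : Measurable g) :
    Measurable (fun ω => f ω * g ω) := by
  refine measurable_pi_iff.mpr ?_
  intro i
  rw [measurable_pi_iff]
  intro j
  simp only [Matrix.mul_apply]
  apply Finset.measurable_sum
  intro k _
  exact ((hf.eval.eval)).mul (hg.eval.eval)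

lemma measurable_list_prod {α : Type*} {N : ℕ} [MeasurableSpace α] {ι' : Type*}
    (l : List ι') (f : ι' → α → Matrix (Fin N) (Fin N) ℝ)
    (h : ∀ i ∈ l, Measurable (f i)) :
    Measurable fun a => (l.map (fun i => f i a)).prod := by
  induction l with
  | nil => simpa using measurable_const
  | cons hd tl ih =>
      simp only [List.map_cons, List.prod_cons]
      exact measurable_matmul (h hd List.mem_cons_self)
        (ih fun i hi => h i (List.mem_cons_of_mem _ hi))

lemma measurable_prodW {N : ℕ} {Ω : Type*} [MeasurableSpace Ω]
    (W : ℕ → Ω → Matrix (Fin N) (Fin N) ℝ) (s : ℕ) :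
    ∀ r, s ≤ r → (∀ k, s + 1 ≤ k → k ≤ r → Measurable (W k)) →
      Measurable (fun ω => prodW (fun k => W k ω) s r) := by
  intro r hr
  induction r, hr using Nat.le_induction with
  | base =>
      intro _
      simpa [prodW_self] using (measurable_const :
        Measurable (fun _ : Ω => (1 : Matrix (Fin N) (Fin N) ℝ)))
  | succ n hn ih =>
      intro hk
      have h1 : Measurable (fun ω => prodW (fun k => W k ω) s n) :=
        ih fun k h1 h2 => hk k h1 (by omega)
      have h2 : Measurable (W (n + 1)) := hk (n + 1) (by omega) le_rfl
      have := measurable_matmul h2 h1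
      simpa [funext fun ω => prodW_succ (fun k => W k ω) hn] using this

lemma integrable_of_bdd {Ω : Type*} [MeasurableSpace Ω] {μ : Measure Ω} [IsFiniteMeasure μ]
    {f : Ω → ℝ} {C : ℝ} (hm : AEStronglyMeasurable f μ) (hb : ∀ᵐ ω ∂μ, |f ω| ≤ C) :
    Integrable f μ :=
  ⟨hm, HasFiniteIntegral.of_bounded (C := C) (by simpa [Real.norm_eq_abs] using hb)⟩

lemma jensen_sqrt {Ω : Type*} [MeasurableSpace Ω] (μ : Measure Ω) [IsProbabilityMeasure μ]
    (f : Ω → ℝ) (hf : ∀ ω, 0 ≤ f ω) (hint : Integrable f μ)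
    (hint2 : Integrable (fun ω => Real.sqrt (f ω)) μ) :
    ∫ ω, Real.sqrt (f ω) ∂μ ≤ Real.sqrt (∫ ω, f ω ∂μ) := by
  set c := ∫ ω, Real.sqrt (f ω) ∂μ with hc
  have hc0 : 0 ≤ c := integral_nonneg fun ω => Real.sqrt_nonneg _
  rw [Real.le_sqrt hc0]
  swap
  · exact integral_nonneg fun ω => hf ω
  have key : 0 ≤ ∫ ω, (Real.sqrt (f ω) - c)^2 ∂μ :=
    integral_nonneg fun ω => sq_nonneg _
  have expand : ∀ ω, (Real.sqrt (f ω) - c)^2 = f ω - 2 * c * Real.sqrt (f ω) + c^2 := by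
    intro ω
    nlinarith [Real.sq_sqrt (hf ω)]
  have hI : ∫ ω, (Real.sqrt (f ω) - c)^2 ∂μ
      = (∫ ω, f ω ∂μ) - 2 * c * c + c^2 := by
    have h1 : Integrable (fun ω => 2 * c * Real.sqrt (f ω)) μ := hint2.const_mul _
    have h2 : Integrable (fun ω => f ω - 2 * c * Real.sqrt (f ω)) μ := hint.sub h1
    rw [integral_congr_ae (Filter.Eventually.of_forall expand),
      integral_add h2 (integrable_const _),
      integral_sub hint h1, integral_const, integral_const_mul]
    simp [← hc]
  nlinarith [key, hI]

lemma ds_prodW {N T : ℕ} {Ω : Type*} [MeasurableSpace Ω] {μ : Measure Ω}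
    (W : ℕ → Ω → Matrix (Fin N) (Fin N) ℝ)
    (hds : ∀ k ∈ Finset.Icc 1 T, ∀ᵐ ω ∂μ, IsDoublyStochastic (W k ω))
    {s : ℕ} (hs : 1 ≤ s) :
    ∀ r, s ≤ r → r ≤ T → ∀ᵐ ω ∂μ, IsDoublyStochastic (prodW (fun k => W k ω) s r) := by
  intro r hr
  induction r, hr using Nat.le_induction with
  | base =>
      intro _
      filter_upwards with ω
      rw [prodW_self]
      exact IsDoublyStochastic.one
  | succ n hn ih =>
      intro hT
      have h1 := hds (n + 1) (by simp only [Finset.mem_Icc]; omega)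
      have h2 := ih (by omega)
      filter_upwards [h1, h2] with ω hω1 hω2
      rw [prodW_succ _ hn]
      exact hω1.mul hω2

lemma indep_prodW {N T : ℕ} {Ω : Type*} [MeasurableSpace Ω] {μ : Measure Ω}
    (W : ℕ → Ω → Matrix (Fin N) (Fin N) ℝ)
    (hmeas : ∀ k ∈ Finset.Icc 1 T, Measurable (W k))
    (hindep : iIndepFun
      (fun k : {k : ℕ // k ∈ Finset.Icc 1 T} => W k.1) μ)
    {s r : ℕ} (hs : 1 ≤ s) (hsr : s ≤ r) (hr : r + 1 ≤ T) :
    IndepFun (fun ω => prodW (fun k => W k ω) s r) (W (r + 1)) μ := by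
  classical
  have hr1 : r + 1 ∈ Finset.Icc 1 T := by simp only [Finset.mem_Icc]; omega
  set S : Finset {k : ℕ // k ∈ Finset.Icc 1 T} :=
    Finset.subtype _ (Finset.Icc (s+1) r) with hS
  set Tset : Finset {k : ℕ // k ∈ Finset.Icc 1 T} := {⟨r + 1, hr1⟩} with hTset
  have hdisj : Disjoint S Tset := by
    rw [Finset.disjoint_singleton_right, hS, Finset.mem_subtype, Finset.mem_Icc]
    change ¬(s + 1 ≤ r + 1 ∧ r + 1 ≤ r)
    omega
  have base := hindep.indepFun_finset S Tset hdisj (fun i => hmeas i.1 i.2)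
  have hGmeas : Measurable (fun u : {x // x ∈ S} → Matrix (Fin N) (Fin N) ℝ =>
      ((List.range (r - s)).map (fun k =>
        if h : r - k ∈ Finset.Icc 1 T ∧ r - k ∈ Finset.Icc (s+1) r
        then u ⟨⟨r - k, h.1⟩, hS ▸ Finset.mem_subtype.mpr h.2⟩
        else 1)).prod) := by
    apply measurable_list_prod (List.range (r - s))
      (f := fun k (u : {x // x ∈ S} → Matrix (Fin N) (Fin N) ℝ) =>
        if h : r - k ∈ Finset.Icc 1 T ∧ r - k ∈ Finset.Icc (s+1) r
        then u ⟨⟨r - k, h.1⟩, hS ▸ Finset.mem_subtype.mpr h.2⟩ else 1)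
    intro k _
    by_cases hc : r - k ∈ Finset.Icc 1 T ∧ r - k ∈ Finset.Icc (s+1) r
    · simp only [hc, dif_pos]
      exact measurable_pi_apply _
    · simp only [hc, dif_neg, not_false_iff]
      exact measurable_const
  have hψ : Measurable (fun u : {x // x ∈ Tset} → Matrix (Fin N) (Fin N) ℝ =>
      u ⟨⟨r + 1, hr1⟩, hTset ▸ Finset.mem_singleton_self _⟩) := measurable_pi_apply _
  have h2 := base.comp hGmeas hψ
  have hGW : ((fun u : {x // x ∈ S} → Matrix (Fin N) (Fin N) ℝ =>
      ((List.range (r - s)).map (fun k =>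
        if h : r - k ∈ Finset.Icc 1 T ∧ r - k ∈ Finset.Icc (s+1) r
        then u ⟨⟨r - k, h.1⟩, hS ▸ Finset.mem_subtype.mpr h.2⟩
        else 1)).prod) ∘ (fun a (i : {x // x ∈ S}) => W i.1.1 a))
      = fun ω => prodW (fun k => W k ω) s r := by
    funext ω
    simp only [Function.comp_apply, prodW]
    refine congrArg List.prod (List.map_congr_left fun k hk => ?_)
    rw [List.mem_range] at hk
    have hc : r - k ∈ Finset.Icc 1 T ∧ r - k ∈ Finset.Icc (s+1) r := by
      simp only [Finset.mem_Icc]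
      omega
    rw [dif_pos hc]
  rw [hGW] at h2
  exact h2

lemma dotProduct_mulVec_expand {N : ℕ} (M : Matrix (Fin N) (Fin N) ℝ) (y : Fin N → ℝ) :
    y ⬝ᵥ (M *ᵥ y) = ∑ i, ∑ j, y i * y j * M i j := by
  simp only [dotProduct, Matrix.mulVec]
  refine Finset.sum_congr rfl fun i _ => ?_
  rw [Finset.mul_sum]
  exact Finset.sum_congr rfl fun j _ => by ring

/-! ### The key second-moment estimate -/

lemma key_sq {N T : ℕ} (hN : 0 < N) {Ω : Type*} [MeasurableSpace Ω]
    (μ : Measure Ω) [IsProbabilityMeasure μ]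
    (W : ℕ → Ω → Matrix (Fin N) (Fin N) ℝ)
    (hmeas : ∀ k ∈ Finset.Icc 1 T, Measurable (W k))
    (hindep : iIndepFun
      (fun k : {k : ℕ // k ∈ Finset.Icc 1 T} => W k.1) μ)
    (hsymm : ∀ k ∈ Finset.Icc 1 T, ∀ᵐ ω ∂μ, (W k ω)ᵀ = W k ω)
    (hds : ∀ k ∈ Finset.Icc 1 T, ∀ᵐ ω ∂μ, IsDoublyStochastic (W k ω))
    (B : ℝ) (hB0 : 0 ≤ B)
    (hBbound : ∀ k ∈ Finset.Icc 1 T,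
      opNorm (matExp μ (fun ω => W k ω * W k ω) - (1 / (N : ℝ)) • onesMatrix N) ≤ B)
    (v : Fin N) (s : ℕ) (hs : 1 ≤ s) :
    ∀ r, s ≤ r → r ≤ T →
      ∫ ω, ∑ i, ((prodW (fun k => W k ω) s r *ᵥ Pi.single v 1) i - 1 / N) ^ 2 ∂μ
        ≤ B ^ (r - s) * (1 - 1 / (N : ℝ)) := by
  have hNpos : (0:ℝ) < N := by exact_mod_cast hN
  have hinvN0 : (0:ℝ) ≤ 1 / N := by positivity
  have hinvN1 : (1:ℝ) / N ≤ 1 := by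
    rw [div_le_one hNpos]
    exact_mod_cast hN
  intro r hr
  induction r, hr using Nat.le_induction with
  | base =>
      intro _
      have hcalc : ∀ ω : Ω,
          ∑ i, ((prodW (fun k => W k ω) s s *ᵥ Pi.single v 1) i - 1 / N) ^ 2
            = 1 - 1 / (N:ℝ) := by
        intro ω
        rw [prodW_self, Matrix.one_mulVec]
        have step : ∀ i : Fin N, ((Pi.single v 1 : Fin N → ℝ) i - 1/N)^2
            = (1/N:ℝ)^2 + (if i = v then 1 - 2/(N:ℝ) else (0:ℝ)) := by
          intro i
          by_cases h : i = v
          · subst h; simp only [Pi.single_eq_same, eq_self_iff_true, if_true]; ring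
          · simp only [Pi.single_eq_of_ne h, if_neg h]; ring
        rw [Finset.sum_congr rfl fun i _ => step i, Finset.sum_add_distrib,
          Finset.sum_const, Finset.card_univ, Fintype.card_fin]
        rw [Finset.sum_ite_eq' Finset.univ v (fun _ => 1 - 2/(N:ℝ)), if_pos (Finset.mem_univ v)]
        rw [nsmul_eq_mul]
        field_simp
        ring
      rw [integral_congr_ae (Filter.Eventually.of_forall hcalc), integral_const]
      simp [Nat.sub_self]
  | succ n hn ih =>
      intro hT1
      have hTn : n ≤ T := by omega
      have hr1T : n + 1 ∈ Finset.Icc 1 T := by simp only [Finset.mem_Icc]; omega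
      set P : Ω → Matrix (Fin N) (Fin N) ℝ := fun ω => prodW (fun k => W k ω) s n with hP
      set x : Ω → Fin N → ℝ := fun ω i => (P ω *ᵥ Pi.single v 1) i - 1 / N with hx
      set A : Matrix (Fin N) (Fin N) ℝ := matExp μ (fun ω => W (n+1) ω * W (n+1) ω) with hA
      have hPmeas : Measurable P :=
        measurable_prodW W s n hn (fun k h1 h2 => hmeas k (by simp only [Finset.mem_Icc]; omega))
      have hxmeas : ∀ i, Measurable (fun ω => x ω i) := by
        intro i
        have heq : (fun ω => x ω i) = fun ω => (∑ j, P ω i j * (Pi.single v 1 : Fin N → ℝ) j) - 1/N := by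
          funext ω
          rw [hx]
          simp [Matrix.mulVec, dotProduct]
        rw [heq]
        exact (Finset.measurable_sum _ fun j _ =>
          (hPmeas.eval.eval).mul measurable_const).sub measurable_const
      have hdsP := ds_prodW W hds hs n hn hTn
      have hds1 := hds (n+1) hr1T
      have hsymm1 := hsymm (n+1) hr1T
      have hxbdd : ∀ᵐ ω ∂μ, ∀ i, |x ω i| ≤ 1 := by
        filter_upwards [hdsP] with ω hω i
        rw [hx]
        have hmv : (P ω *ᵥ Pi.single v 1) i = P ω i v := by
          rw [Matrix.mulVec_single]
          exact mul_one _
        simp only []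
        rw [hmv, abs_le]
        constructor
        · have := hω.1 i v
          linarith
        · have := hω.entry_le_one i v
          linarith
      have hsum0 : ∀ᵐ ω ∂μ, ∑ i, x ω i = 0 := by
        filter_upwards [hdsP] with ω hω
        have h1 : ∑ i, (P ω *ᵥ Pi.single v 1) i = ∑ i, (Pi.single v 1 : Fin N → ℝ) i :=
          hω.mulVec_sum _
        have h2 : ∑ i, (Pi.single v 1 : Fin N → ℝ) i = 1 := by simp
        rw [hx]
        simp only []
        rw [Finset.sum_sub_distrib, h1, h2, Finset.sum_const, Finset.card_univ,
          Fintype.card_fin, nsmul_eq_mul]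
        field_simp
        norm_num
      have hstep : ∀ᵐ ω ∂μ,
          ∑ i, ((prodW (fun k => W k ω) s (n+1) *ᵥ Pi.single v 1) i - 1/N)^2
            = x ω ⬝ᵥ ((W (n+1) ω * W (n+1) ω) *ᵥ x ω) := by
        filter_upwards [hds1, hsymm1] with ω hdsW hsW
        rw [prodW_succ _ hn, ← Matrix.mulVec_mulVec]
        have h1 : (fun i => (W (n+1) ω *ᵥ (P ω *ᵥ Pi.single v 1)) i - 1/N)
            = W (n+1) ω *ᵥ x ω := by
          have hxe : x ω = (P ω *ᵥ Pi.single v 1) - (fun _ => (1:ℝ)/N) := by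
            funext i
            simp [hx, Pi.sub_apply]
          rw [hxe, Matrix.mulVec_sub, hdsW.mulVec_const]
          funext i
          simp [Pi.sub_apply]
        have h2 : ∀ i, ((W (n+1) ω *ᵥ (P ω *ᵥ Pi.single v 1)) i - 1/N)^2
            = ((W (n+1) ω *ᵥ x ω) i)^2 := fun i => by rw [← congrFun h1 i]
        rw [Finset.sum_congr rfl fun i _ => h2 i]
        have h3 : ∑ i, ((W (n+1) ω *ᵥ x ω) i)^2
            = (W (n+1) ω *ᵥ x ω) ⬝ᵥ (W (n+1) ω *ᵥ x ω) := by
          simp [dotProduct, sq]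
        rw [h3, Matrix.dotProduct_mulVec, ← Matrix.mulVec_transpose, hsW,
          Matrix.mulVec_mulVec, dotProduct_comm]
      have hMb : ∀ᵐ ω ∂μ, ∀ i j, 0 ≤ (W (n+1) ω * W (n+1) ω) i j
          ∧ (W (n+1) ω * W (n+1) ω) i j ≤ 1 := by
        filter_upwards [hds1] with ω hω i j
        exact ⟨(hω.mul hω).1 i j, (hω.mul hω).entry_le_one i j⟩
      have hWmeas : Measurable (W (n+1)) := hmeas _ hr1T
      have hW2meas : ∀ i j : Fin N, Measurable (fun ω => (W (n+1) ω * W (n+1) ω) i j) :=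
        fun i j => (measurable_matmul hWmeas hWmeas).eval.eval
      have hIntXX : ∀ i j : Fin N, Integrable (fun ω => x ω i * x ω j) μ := fun i j =>
        integrable_of_bdd ((hxmeas i).mul (hxmeas j)).aestronglyMeasurable (by
          filter_upwards [hxbdd] with ω h
          rw [abs_mul]
          exact mul_le_one₀ (h i) (abs_nonneg _) (h j))
      have hIntterm : ∀ i j : Fin N,
          Integrable (fun ω => x ω i * x ω j * (W (n+1) ω * W (n+1) ω) i j) μ := fun i j =>
        integrable_of_bdd (((hxmeas i).mul (hxmeas j)).mul (hW2meas i j)).aestronglyMeasurable (by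
          filter_upwards [hxbdd, hMb] with ω h hM
          rw [abs_mul]
          have h1 : |x ω i * x ω j| ≤ 1 := by
            rw [abs_mul]
            exact mul_le_one₀ (h i) (abs_nonneg _) (h j)
          have h2 : |(W (n+1) ω * W (n+1) ω) i j| ≤ 1 := by
            rw [abs_le]
            exact ⟨by linarith [(hM i j).1], (hM i j).2⟩
          calc |x ω i * x ω j| * |(W (n+1) ω * W (n+1) ω) i j| ≤ 1 * 1 :=
                mul_le_mul h1 h2 (abs_nonneg _) zero_le_one
            _ = 1 := one_mul 1)
      have hIndep : IndepFun P (W (n+1)) μ := indep_prodW W hmeas hindep hs hn hT1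
      have hXYindep : ∀ i j : Fin N, IndepFun (fun ω => x ω i * x ω j)
          (fun ω => (W (n+1) ω * W (n+1) ω) i j) μ := by
        intro i j
        have hmv : ∀ a : Fin N, Measurable (fun M : Matrix (Fin N) (Fin N) ℝ =>
            (M *ᵥ Pi.single v 1) a) := by
          intro a
          simp only [Matrix.mulVec, dotProduct]
          exact Finset.measurable_sum _ fun b _ =>
            Measurable.mul (f := fun M : Matrix (Fin N) (Fin N) ℝ => M a b)
              ((measurable_pi_apply a).eval) measurable_const
        have hφ : Measurable (fun M : Matrix (Fin N) (Fin N) ℝ =>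
            ((M *ᵥ Pi.single v 1) i - 1/N) * ((M *ᵥ Pi.single v 1) j - 1/N)) :=
          ((hmv i).sub measurable_const).mul ((hmv j).sub measurable_const)
        have hψ : Measurable (fun M : Matrix (Fin N) (Fin N) ℝ => (M * M) i j) := by
          simp only [Matrix.mul_apply]
          exact Finset.measurable_sum _ fun k _ =>
            Measurable.mul (f := fun M : Matrix (Fin N) (Fin N) ℝ => M i k)
              (g := fun M : Matrix (Fin N) (Fin N) ℝ => M k j)
              ((measurable_pi_apply i).eval) ((measurable_pi_apply k).eval)
        exact hIndep.comp hφ hψ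
      have hAij : ∀ i j : Fin N, A i j = ∫ ω, (W (n+1) ω * W (n+1) ω) i j ∂μ := by
        intro i j
        rw [hA]
        rfl
      have hEq1 : ∫ ω, ∑ i, ((prodW (fun k => W k ω) s (n+1) *ᵥ Pi.single v 1) i - 1/N)^2 ∂μ
          = ∫ ω, ∑ i, ∑ j, x ω i * x ω j * (W (n+1) ω * W (n+1) ω) i j ∂μ := by
        refine integral_congr_ae ?_
        filter_upwards [hstep] with ω hω
        rw [hω, dotProduct_mulVec_expand]
      have hEq2 : ∫ ω, ∑ i, ∑ j, x ω i * x ω j * (W (n+1) ω * W (n+1) ω) i j ∂μ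
          = ∑ i, ∑ j, (∫ ω, x ω i * x ω j ∂μ) * A i j := by
        rw [integral_finset_sum _ (fun i _ => integrable_finset_sum _ (fun j _ => hIntterm i j))]
        refine Finset.sum_congr rfl fun i _ => ?_
        rw [integral_finset_sum _ (fun j _ => hIntterm i j)]
        refine Finset.sum_congr rfl fun j _ => ?_
        rw [hAij i j]
        exact (hXYindep i j).integral_fun_mul_eq_mul_integral
          (((hxmeas i).mul (hxmeas j)).aestronglyMeasurable)
          ((hW2meas i j).aestronglyMeasurable)
      have hEq3 : ∑ i, ∑ j, (∫ ω, x ω i * x ω j ∂μ) * A i j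
          = ∫ ω, x ω ⬝ᵥ (A *ᵥ x ω) ∂μ := by
        have h1 : ∀ i j : Fin N, (∫ ω, x ω i * x ω j ∂μ) * A i j
            = ∫ ω, x ω i * x ω j * A i j ∂μ := fun i j =>
          (integral_mul_const (A i j) _).symm
        rw [Finset.sum_congr rfl fun i _ => Finset.sum_congr rfl fun j _ => h1 i j]
        rw [Finset.sum_congr rfl fun i (_ : i ∈ Finset.univ) =>
          (integral_finset_sum Finset.univ fun j _ => (hIntXX i j).mul_const (A i j)).symm]
        rw [← integral_finset_sum _ (f := fun i ω => ∑ j, x ω i * x ω j * A i j)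
          (fun i _ => integrable_finset_sum _
          (fun j _ => (hIntXX i j).mul_const _))]
        refine integral_congr_ae (Filter.Eventually.of_forall fun ω => ?_)
        exact (dotProduct_mulVec_expand A (x ω)).symm
      have hquad : ∀ᵐ ω ∂μ, x ω ⬝ᵥ (A *ᵥ x ω) ≤ B * ∑ i, (x ω i)^2 := by
        filter_upwards [hsum0] with ω h0
        have hones : onesMatrix N *ᵥ x ω = fun _ => (0:ℝ) := by
          funext i
          simp [onesMatrix, Matrix.mulVec, dotProduct, h0]
        have hdecomp : A *ᵥ x ω = (A - (1/(N:ℝ)) • onesMatrix N) *ᵥ x ω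
            + (1/(N:ℝ)) • (onesMatrix N *ᵥ x ω) := by
          rw [← Matrix.smul_mulVec, ← Matrix.add_mulVec, sub_add_cancel]
        rw [hdecomp, dotProduct_add, hones]
        have h2 : x ω ⬝ᵥ ((1/(N:ℝ)) • fun _ : Fin N => (0:ℝ)) = 0 := by
          simp [dotProduct]
        rw [h2, add_zero]
        calc x ω ⬝ᵥ ((A - (1/(N:ℝ)) • onesMatrix N) *ᵥ x ω)
            ≤ opNorm (A - (1/(N:ℝ)) • onesMatrix N) * ∑ i, (x ω i)^2 := quad_le _ _
          _ ≤ B * ∑ i, (x ω i)^2 := by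
              refine mul_le_mul_of_nonneg_right ?_
                (Finset.sum_nonneg fun i _ => sq_nonneg _)
              rw [hA]
              exact hBbound (n+1) hr1T
      have hIntsq : Integrable (fun ω => ∑ i, (x ω i)^2) μ :=
        integrable_finset_sum _ fun i _ => integrable_of_bdd
          ((hxmeas i).pow_const 2).aestronglyMeasurable (by
            filter_upwards [hxbdd] with ω h
            rw [abs_pow]
            exact pow_le_one₀ (abs_nonneg _) (h i))
      have hIntquadA : Integrable (fun ω => x ω ⬝ᵥ (A *ᵥ x ω)) μ := by
        have hrw : (fun ω => x ω ⬝ᵥ (A *ᵥ x ω))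
            = fun ω => ∑ i, ∑ j, x ω i * x ω j * A i j :=
          funext fun ω => dotProduct_mulVec_expand A (x ω)
        rw [hrw]
        exact integrable_finset_sum _ fun i _ => integrable_finset_sum _
          fun j _ => (hIntXX i j).mul_const _
      calc ∫ ω, ∑ i, ((prodW (fun k => W k ω) s (n+1) *ᵥ Pi.single v 1) i - 1/N)^2 ∂μ
          = ∫ ω, x ω ⬝ᵥ (A *ᵥ x ω) ∂μ := by rw [hEq1, hEq2, hEq3]
        _ ≤ ∫ ω, B * ∑ i, (x ω i)^2 ∂μ :=
            integral_mono_ae hIntquadA (hIntsq.const_mul B) hquad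
        _ = B * ∫ ω, ∑ i, (x ω i)^2 ∂μ := integral_const_mul B _
        _ ≤ B * (B ^ (n - s) * (1 - 1/(N:ℝ))) :=
            mul_le_mul_of_nonneg_left (ih hTn) hB0
        _ = B ^ (n + 1 - s) * (1 - 1/(N:ℝ)) := by
            rw [show n + 1 - s = (n - s) + 1 from by omega, pow_succ]
            ring


theorem stmt19 {N T : ℕ} (hN : 0 < N) {Ω : Type*} [MeasurableSpace Ω]
    (μ : Measure Ω) [IsProbabilityMeasure μ]
    (W : ℕ → Ω → Matrix (Fin N) (Fin N) ℝ)
    (hmeas : ∀ k ∈ Finset.Icc 1 T, Measurable (W k))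
    (hindep : iIndepFun
      (fun k : {k : ℕ // k ∈ Finset.Icc 1 T} => W k.1) μ)
    (hsymm : ∀ k ∈ Finset.Icc 1 T, ∀ᵐ ω ∂μ, (W k ω)ᵀ = W k ω)
    (hds : ∀ k ∈ Finset.Icc 1 T, ∀ᵐ ω ∂μ, IsDoublyStochastic (W k ω))
    (B : ℝ) (hB0 : 0 ≤ B) (hB1 : B ≤ 1)
    (hBbound : ∀ k ∈ Finset.Icc 1 T,
      opNorm (matExp μ (fun ω => W k ω * W k ω) - (1 / (N : ℝ)) • onesMatrix N) ≤ B)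
    (v : Fin N) (s t : ℕ) (hs : 1 ≤ s) (hst : s < t) (ht : t ≤ T) :
    ∫ ω, eNorm (fun i =>
        (prodW (fun k => W k ω) s t).mulVec (Pi.single v 1) i - 1 / N) ∂μ
      ≤ B ^ (((t - s : ℕ) : ℝ) / 2) := by
  have hNpos : (0:ℝ) < N := by exact_mod_cast hN
  have hinvN0 : (0:ℝ) ≤ 1 / N := by positivity
  have hst' : s ≤ t := le_of_lt hst
  have key := key_sq hN μ W hmeas hindep hsymm hds B hB0 hBbound v s hs t hst' ht
  set f : Ω → ℝ :=
    fun ω => ∑ i, ((prodW (fun k => W k ω) s t *ᵥ Pi.single v 1) i - 1/(N:ℝ))^2 with hf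
  have hfnonneg : ∀ ω, 0 ≤ f ω := fun ω => Finset.sum_nonneg fun i _ => sq_nonneg _
  have hPmeas : Measurable (fun ω => prodW (fun k => W k ω) s t) :=
    measurable_prodW W s t hst' (fun k h1 h2 => hmeas k (by simp only [Finset.mem_Icc]; omega))
  have hxmeas : ∀ i : Fin N, Measurable (fun ω =>
      (prodW (fun k => W k ω) s t *ᵥ Pi.single v 1) i - 1/(N:ℝ)) := by
    intro i
    have heq : (fun ω => (prodW (fun k => W k ω) s t *ᵥ Pi.single v 1) i - 1/(N:ℝ))
        = fun ω => (∑ j, prodW (fun k => W k ω) s t i j * (Pi.single v 1 : Fin N → ℝ) j)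
          - 1/(N:ℝ) := by
      funext ω
      simp [Matrix.mulVec, dotProduct]
    rw [heq]
    exact (Finset.measurable_sum _ fun j _ =>
      (hPmeas.eval.eval).mul measurable_const).sub measurable_const
  have hfmeas : Measurable f := by
    rw [hf]
    exact Finset.measurable_sum _ fun i _ => (hxmeas i).pow_const 2
  have hdsP := ds_prodW W hds hs t hst' ht
  have hxbdd : ∀ᵐ ω ∂μ, ∀ i : Fin N,
      |(prodW (fun k => W k ω) s t *ᵥ Pi.single v 1) i - 1/(N:ℝ)| ≤ 1 := by
    have hinvN1 : (1:ℝ) / N ≤ 1 := by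
      rw [div_le_one hNpos]
      exact_mod_cast hN
    filter_upwards [hdsP] with ω hω i
    have hmv : (prodW (fun k => W k ω) s t *ᵥ Pi.single v 1) i
        = prodW (fun k => W k ω) s t i v := by
      rw [Matrix.mulVec_single]
      exact mul_one _
    rw [hmv, abs_le]
    exact ⟨by linarith [hω.1 i v], by linarith [hω.entry_le_one i v]⟩
  have hfbdd : ∀ᵐ ω ∂μ, |f ω| ≤ (N:ℝ) := by
    filter_upwards [hxbdd] with ω h
    rw [abs_of_nonneg (hfnonneg ω), hf]
    calc ∑ i, ((prodW (fun k => W k ω) s t *ᵥ Pi.single v 1) i - 1/(N:ℝ))^2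
        ≤ ∑ _i : Fin N, (1:ℝ) := Finset.sum_le_sum fun i _ => by
          have := h i
          nlinarith [abs_nonneg ((prodW (fun k => W k ω) s t *ᵥ Pi.single v 1) i - 1/(N:ℝ)),
            sq_abs ((prodW (fun k => W k ω) s t *ᵥ Pi.single v 1) i - 1/(N:ℝ))]
      _ = (N:ℝ) := by simp
  have hint : Integrable f μ := integrable_of_bdd hfmeas.aestronglyMeasurable hfbdd
  have hint2 : Integrable (fun ω => Real.sqrt (f ω)) μ :=
    integrable_of_bdd (C := Real.sqrt (N:ℝ))
      (Real.continuous_sqrt.measurable.comp hfmeas).aestronglyMeasurable (by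
      filter_upwards [hfbdd] with ω h
      rw [abs_of_nonneg (Real.sqrt_nonneg _)]
      exact Real.sqrt_le_sqrt (abs_le.mp h).2)
  have heNorm : (fun ω => eNorm fun i =>
      (prodW (fun k => W k ω) s t).mulVec (Pi.single v 1) i - 1 / (N:ℝ))
      = fun ω => Real.sqrt (f ω) := rfl
  rw [heNorm]
  calc ∫ ω, Real.sqrt (f ω) ∂μ ≤ Real.sqrt (∫ ω, f ω ∂μ) :=
        jensen_sqrt μ f hfnonneg hint hint2
    _ ≤ Real.sqrt (B ^ (t - s) * (1 - 1/(N:ℝ))) := Real.sqrt_le_sqrt key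
    _ ≤ Real.sqrt (B ^ (t - s)) := Real.sqrt_le_sqrt
        (mul_le_of_le_one_right (pow_nonneg hB0 _) (by linarith))
    _ = B ^ (((t - s : ℕ) : ℝ) / 2) := by
        rw [Real.sqrt_eq_rpow, ← Real.rpow_natCast B (t - s), ← Real.rpow_mul hB0]
        congr 1
        ring

end
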